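/- (Structure of fundamental solutions, continuous part of Proposition 1.) Fix a positive integer N, a complex number z ≠ 0, and t₀ ∈ ℝ. Let V : ℝ → M_{2N}(ℂ) be continuous with V(t) ∈ 𝕄_d for every t ∈ ℝ. If μ : ℝ → M_{2N}(ℂ) is differentiable and satisfies the linear ODE μ′(t) = i ω(z) (Σ₃ μ(t) − μ(t) Σ₃) + V(t) μ(t) for all t ∈ ℝ, and μ(t₀) ∈ 𝕄_d, then μ(t) ∈ 𝕄_d for all t ∈ ℝ. -/

import Mathlib

noncomputable section

open Matrix

/-- `𝕄_d`: the set of `2N×2N` complex matrices (rows/columns indexed by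
`Fin 2 × Fin N`) all of whose four `N×N` blocks are diagonal matrices. -/
def MdSet (N : ℕ) : Set (Matrix (Fin 2 × Fin N) (Fin 2 × Fin N) ℂ) :=
  {M | ∀ (j k : Fin 2) (a b : Fin N), a ≠ b → M (j, a) (k, b) = 0}

/-- `Σ₃ = diag(I_N, −I_N)`. -/
def Sigma3 (N : ℕ) : Matrix (Fin 2 × Fin N) (Fin 2 × Fin N) ℂ :=
  Matrix.diagonal fun x => if x.1 = 0 then 1 else -1

/-- `ω(z) = (1/2)(z − z⁻¹)²`. -/
def omega (z : ℂ) : ℂ := (1 / 2 : ℂ) * (z - z⁻¹) ^ 2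

section Aux


variable (N : ℕ) (z : ℂ) (V : ℝ → Matrix (Fin 2 × Fin N) (Fin 2 × Fin N) ℂ)

def cCoef (x y : Fin 2 × Fin N) : ℂ :=
  Complex.I * omega z *
    ((if x.1 = 0 then (1 : ℂ) else -1) - (if y.1 = 0 then (1 : ℂ) else -1))

def vField (t : ℝ) (M : (Fin 2 × Fin N) → (Fin 2 × Fin N) → ℂ) :
    (Fin 2 × Fin N) → (Fin 2 × Fin N) → ℂ :=
  fun x y => if x.2 = y.2 then 0 else
    cCoef N z x y * M x y + ∑ l : Fin 2, V t x (l, x.2) * M (l, x.2) y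

lemma vField_zero (t : ℝ) : vField N z V t 0 = 0 := by
  funext x y
  simp [vField]

lemma cCoef_abs_le (x y : Fin 2 × Fin N) :
    ‖cCoef N z x y‖ ≤ 2 * ‖Complex.I * omega z‖ := by
  rw [cCoef, norm_mul]
  have h : ‖(if x.1 = 0 then (1 : ℂ) else -1) - (if y.1 = 0 then (1 : ℂ) else -1)‖ ≤ 2 := by
    split_ifs <;> norm_num
  calc ‖Complex.I * omega z‖ *
        ‖(if x.1 = 0 then (1 : ℂ) else -1) - (if y.1 = 0 then (1 : ℂ) else -1)‖
      ≤ ‖Complex.I * omega z‖ * 2 :=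
        mul_le_mul_of_nonneg_left h (norm_nonneg _)
    _ = 2 * ‖Complex.I * omega z‖ := mul_comm _ _

def Kt (t : ℝ) : ℝ :=
  2 * ‖Complex.I * omega z‖ +
    ∑ x : Fin 2 × Fin N, ∑ l : Fin 2, ‖V t x (l, x.2)‖

lemma Kt_nonneg (t : ℝ) : 0 ≤ Kt N z V t := by
  have h1 : (0:ℝ) ≤ ∑ x : Fin 2 × Fin N, ∑ l : Fin 2, ‖V t x (l, x.2)‖ :=
    Finset.sum_nonneg fun x _ => Finset.sum_nonneg fun l _ => norm_nonneg _
  have h2 : (0:ℝ) ≤ 2 * ‖Complex.I * omega z‖ := by positivity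
  unfold Kt; linarith

lemma vField_lipschitz (t : ℝ) :
    LipschitzWith (Real.toNNReal (Kt N z V t)) (vField N z V t) := by
  apply LipschitzWith.of_dist_le_mul
  intro M M'
  rw [dist_eq_norm, dist_eq_norm]
  have hKt : ((Kt N z V t).toNNReal : ℝ) = Kt N z V t := Real.coe_toNNReal _ (Kt_nonneg N z V t)
  have hC : (0:ℝ) ≤ ((Kt N z V t).toNNReal : ℝ) * ‖M - M'‖ := by positivity
  rw [pi_norm_le_iff_of_nonneg hC]
  intro x
  rw [pi_norm_le_iff_of_nonneg hC]
  intro y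
  simp only [Pi.sub_apply, vField]
  rw [hKt]
  have hD : ∀ p q : Fin 2 × Fin N, ‖M p q - M' p q‖ ≤ ‖M - M'‖ := by
    intro p q
    have h1 : ‖(M - M') p q‖ ≤ ‖(M - M') p‖ := norm_le_pi_norm ((M - M') p) q
    have h2 : ‖(M - M') p‖ ≤ ‖M - M'‖ := norm_le_pi_norm (M - M') p
    simpa using h1.trans h2
  by_cases h : x.2 = y.2
  · rw [if_pos h, if_pos h, sub_zero]
    simp only [norm_zero]
    exact mul_nonneg (Kt_nonneg N z V t) (norm_nonneg _)
  · rw [if_neg h, if_neg h]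
    have key : (cCoef N z x y * M x y + ∑ l : Fin 2, V t x (l, x.2) * M (l, x.2) y) -
        (cCoef N z x y * M' x y + ∑ l : Fin 2, V t x (l, x.2) * M' (l, x.2) y)
        = cCoef N z x y * (M x y - M' x y) +
          ∑ l : Fin 2, V t x (l, x.2) * (M (l, x.2) y - M' (l, x.2) y) := by
      simp only [mul_sub, Finset.sum_sub_distrib]; ring
    rw [key]
    have step1 : ‖cCoef N z x y * (M x y - M' x y) +
        ∑ l : Fin 2, V t x (l, x.2) * (M (l, x.2) y - M' (l, x.2) y)‖
        ≤ ‖cCoef N z x y‖ * ‖M - M'‖ +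
          ∑ l : Fin 2, ‖V t x (l, x.2)‖ * ‖M - M'‖ := by
      refine (norm_add_le _ _).trans (add_le_add ?_ ?_)
      · rw [norm_mul]
        exact mul_le_mul_of_nonneg_left (hD x y) (norm_nonneg _)
      · refine (norm_sum_le _ _).trans (Finset.sum_le_sum fun l _ => ?_)
        rw [norm_mul]
        exact mul_le_mul_of_nonneg_left (hD _ y) (norm_nonneg _)
    refine step1.trans ?_
    rw [← Finset.sum_mul, ← add_mul]
    refine mul_le_mul_of_nonneg_right ?_ (norm_nonneg _)
    unfold Kt
    refine add_le_add (cCoef_abs_le N z x y) ?_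
    exact Finset.single_le_sum (f := fun p => ∑ l : Fin 2, ‖V t p (l, p.2)‖)
      (fun p _ => Finset.sum_nonneg fun l _ => norm_nonneg _) (Finset.mem_univ x)

lemma Kt_continuous (hVcont : ∀ x y, Continuous fun t => V t x y) :
    Continuous (Kt N z V) := by
  unfold Kt
  refine continuous_const.add ?_
  refine continuous_finset_sum _ fun x _ => continuous_finset_sum _ fun l _ => ?_
  exact continuous_norm.comp (hVcont x (l, x.2))

end Aux

/-- Continuous part of Proposition 1: if `V` is continuous and `𝕄_d`-valued, `μ`
solves the linear ODE `μ′(t) = i ω(z) (Σ₃ μ − μ Σ₃) + V(t) μ(t)` (entrywise), and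
`μ(t₀) ∈ 𝕄_d`, then `μ(t) ∈ 𝕄_d` for all `t`. -/
theorem stmt3 (N : ℕ) (hN : 0 < N) (z : ℂ) (hz : z ≠ 0) (t₀ : ℝ)
    (V : ℝ → Matrix (Fin 2 × Fin N) (Fin 2 × Fin N) ℂ)
    (hVcont : ∀ x y, Continuous fun t => V t x y)
    (hV : ∀ t, V t ∈ MdSet N)
    (μ : ℝ → Matrix (Fin 2 × Fin N) (Fin 2 × Fin N) ℂ)
    (hμ : ∀ (t : ℝ) (x y : Fin 2 × Fin N),
      HasDerivAt (fun s => μ s x y)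
        (((Complex.I * omega z) • (Sigma3 N * μ t - μ t * Sigma3 N)
          + V t * μ t) x y) t)
    (hinit : μ t₀ ∈ MdSet N) :
    ∀ t, μ t ∈ MdSet N := by
  classical
  intro t₁
  set ν : ℝ → ((Fin 2 × Fin N) → (Fin 2 × Fin N) → ℂ) :=
    fun t x y => if x.2 = y.2 then 0 else μ t x y with hνdef
  have hν0 : ν t₀ = 0 := by
    funext x y
    by_cases h : x.2 = y.2
    · simp [hνdef, h]
    · simpa [hνdef, h] using hinit x.1 y.1 x.2 y.2 h
  have hνderiv : ∀ t, HasDerivAt ν (vField N z V t (ν t)) t := by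
    intro t
    rw [hasDerivAt_pi]
    intro x
    rw [hasDerivAt_pi]
    intro y
    by_cases h : x.2 = y.2
    · have : (fun s => ν s x y) = fun _ => (0 : ℂ) := by
        funext s; simp [hνdef, h]
      rw [this, show vField N z V t (ν t) x y = 0 from by rw [vField, if_pos h]]
      exact hasDerivAt_const _ _
    · have hmain := hμ t x y
      have hfun : (fun s => ν s x y) = fun s => μ s x y := by
        funext s; simp [hνdef, h]
      rw [hfun]
      refine (hmain.congr_deriv ?_); symm
      have hsum : ∑ j : Fin 2 × Fin N, V t x j * μ t j y
          = ∑ l : Fin 2, V t x (l, x.2) * μ t (l, x.2) y := by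
        rw [Fintype.sum_prod_type]
        refine Finset.sum_congr rfl fun l _ => ?_
        refine Finset.sum_eq_single x.2 (fun c _ hc => ?_)
          (fun hmem => absurd (Finset.mem_univ _) hmem)
        rw [hV t x.1 l x.2 c (fun hcc => hc hcc.symm), zero_mul]
      have hS1 : (Sigma3 N * μ t) x y = (if x.1 = 0 then (1:ℂ) else -1) * μ t x y := by
        rw [Sigma3, Matrix.diagonal_mul]
      have hS2 : (μ t * Sigma3 N) x y = μ t x y * (if y.1 = 0 then (1:ℂ) else -1) := by
        rw [Sigma3, Matrix.mul_diagonal]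
      rw [vField, if_neg h]
      simp only [hνdef, if_neg h, Matrix.add_apply, Matrix.smul_apply, Matrix.sub_apply,
        hS1, hS2, Matrix.mul_apply, smul_eq_mul]
      rw [hsum, cCoef]
      ring
  -- interval and clamped vector field
  set a : ℝ := min t₀ t₁ - 1 with ha
  set b : ℝ := max t₀ t₁ + 1 with hb
  have hab : a ≤ b := by
    have h1 := min_le_left t₀ t₁
    have h2 := le_max_left t₀ t₁
    rw [ha, hb]; linarith
  obtain ⟨tm, htm, hmax⟩ := isCompact_Icc.exists_isMaxOn (Set.nonempty_Icc.2 hab)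
    ((Kt_continuous N z V hVcont).continuousOn)
  set u : ℝ → ℝ := fun s => max a (min b s) with hu
  have hu_mem : ∀ s, u s ∈ Set.Icc a b :=
    fun s => ⟨le_max_left _ _, max_le hab (min_le_left _ _)⟩
  have hu_eq : ∀ s ∈ Set.Icc a b, u s = s := by
    intro s hs
    rw [hu]
    simp only [min_eq_right hs.2, max_eq_right hs.1]
  set w : ℝ → ((Fin 2 × Fin N) → (Fin 2 × Fin N) → ℂ) → ((Fin 2 × Fin N) → (Fin 2 × Fin N) → ℂ) :=
    fun s => vField N z V (u s) with hw
  have hwlip : ∀ s, LipschitzOnWith (Real.toNNReal (Kt N z V tm)) (w s) Set.univ := by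
    intro s
    exact ((vField_lipschitz N z V (u s)).weaken
      (Real.toNNReal_mono (hmax (hu_mem s)))).lipschitzOnWith
  have ht₀ : t₀ ∈ Set.Ioo a b := by
    have h1 := min_le_left t₀ t₁
    have h2 := le_max_left t₀ t₁
    constructor <;> [rw [ha]; rw [hb]] <;> linarith
  have ht₁ : t₁ ∈ Set.Ioo a b := by
    have h1 := min_le_right t₀ t₁
    have h2 := le_max_right t₀ t₁
    constructor <;> [rw [ha]; rw [hb]] <;> linarith
  have heq : Set.EqOn ν (fun _ => 0) (Set.Ioo a b) := by
    refine ODE_solution_unique_of_mem_Ioo (v := w) (s := fun _ => Set.univ) (fun s _ => hwlip s) ht₀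
      (fun s hs => ⟨?_, trivial⟩) (fun s hs => ⟨?_, trivial⟩) (by rw [hν0])
    · rw [hw]
      simp only
      rw [hu_eq s (Set.Ioo_subset_Icc_self hs)]
      exact hνderiv s
    · rw [hw]
      simp only
      rw [vField_zero]
      exact hasDerivAt_const _ _
  intro j k aa bb hne
  have h0 := congrFun (congrFun (heq ht₁) (j, aa)) (k, bb)
  simpa [hνdef, hne] using h0

end
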